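/- arXiv:1911.00798 — 2 statements merged into one kernel-verified Lean document; each statement's English description precedes it below -/
import Mathlib

section
/- Let V be a finite-dimensional real vector space with inner product h and A : V → V invertible and h-skew-symmetric. Then there exists a symmetric positive definite operator S commuting with A such that (AS)² = -Id. Moreover S can be chosen as a polynomial in A². -/
open Polynomial RealInnerProductSpace

private theorem aux_aeval_isSymmetric {E : Type*} [NormedAddCommGroup E]
    [InnerProductSpace ℝ E] {B : Module.End ℝ E} (hB : LinearMap.IsSymmetric B)
    (p : ℝ[X]) : LinearMap.IsSymmetric (Polynomial.aeval B p : Module.End ℝ E) := by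
  induction p using Polynomial.induction_on' with
  | add p q hp hq => rw [map_add]; exact hp.add hq
  | monomial n c =>
      rw [Polynomial.aeval_monomial, ← Algebra.smul_def]
      exact (hB.pow n).smul (by simp)

private theorem aux_sqrt_inv {E : Type*} [NormedAddCommGroup E] [InnerProductSpace ℝ E]
    [FiniteDimensional ℝ E] {B : Module.End ℝ E} (hB : LinearMap.IsSymmetric B)
    (hBpos : ∀ x, x ≠ 0 → 0 < ⟪B x, x⟫) :
    ∃ S : Module.End ℝ E, LinearMap.IsSymmetric S ∧ (∀ x, x ≠ 0 → 0 < ⟪S x, x⟫) ∧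
      B * (S * S) = 1 ∧ ∃ p : ℝ[X], S = Polynomial.aeval B p := by
  classical
  have hn : Module.finrank ℝ E = Module.finrank ℝ E := rfl
  set b := hB.eigenvectorBasis hn with hbdef
  set μ := hB.eigenvalues hn with hμdef
  have hBb : ∀ i, B (b i) = μ i • b i := by
    intro i
    exact_mod_cast hB.apply_eigenvectorBasis hn i
  have hμpos : ∀ i, 0 < μ i := by
    intro i
    have hb0 : (b i : E) ≠ 0 := by
      have := (hB.eigenvectorBasis hn).toBasis.ne_zero i
      simpa [hbdef] using this
    have h1 := hBpos (b i) hb0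
    rw [hBb i, real_inner_smul_left] at h1
    have h2 : ⟪(b i : E), b i⟫ = 1 := by
      rw [real_inner_self_eq_norm_sq, b.orthonormal.1 i]; norm_num
    rw [h2, mul_one] at h1
    exact h1
  set s : Finset ℝ := Finset.image μ Finset.univ with hsdef
  set p : ℝ[X] := Lagrange.interpolate s id (fun t => (Real.sqrt t)⁻¹) with hpdef
  have hpeval : ∀ i, p.eval (μ i) = (Real.sqrt (μ i))⁻¹ := by
    intro i
    have := Lagrange.eval_interpolate_at_node (fun t => (Real.sqrt t)⁻¹)
      (Function.injective_id.injOn) (Finset.mem_image_of_mem μ (Finset.mem_univ i))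
    simpa [hpdef, hsdef] using this
  set S : Module.End ℝ E := Polynomial.aeval B p with hSdef
  have hSb : ∀ i, S (b i) = (Real.sqrt (μ i))⁻¹ • b i := by
    intro i
    have he : Module.End.HasEigenvector B (μ i) (b i) := by
      have := hB.hasEigenvector_eigenvectorBasis hn i
      simpa using this
    rw [hSdef, Module.End.aeval_apply_of_hasEigenvector he, hpeval]
  have hSsym : LinearMap.IsSymmetric S := aux_aeval_isSymmetric hB p
  have hBSS : B * (S * S) = 1 := by
    apply b.toBasis.ext
    intro i
    have hcoe : b.toBasis i = b i := by rw [b.coe_toBasis]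
    rw [hcoe, Module.End.mul_apply, Module.End.mul_apply, hSb, map_smul, hSb, map_smul,
      map_smul, hBb i, Module.End.one_apply, smul_smul, smul_smul]
    have hc : (Real.sqrt (μ i))⁻¹ * (Real.sqrt (μ i))⁻¹ * μ i = 1 := by
      rw [← mul_inv, Real.mul_self_sqrt (hμpos i).le]
      exact inv_mul_cancel₀ (hμpos i).ne'
    rw [hc, one_smul]
  have hrepr : ∀ (x : E) i, b.repr (S x) i = (Real.sqrt (μ i))⁻¹ * b.repr x i := by
    intro x i
    rw [b.repr_apply_apply, b.repr_apply_apply, ← hSsym (b i) x, hSb, real_inner_smul_left]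
  have hSpos : ∀ x, x ≠ 0 → 0 < ⟪S x, x⟫ := by
    intro x hx
    have key : ⟪S x, x⟫ = ∑ i, b.repr (S x) i * b.repr x i := by
      have hmm := b.repr.inner_map_map (S x) x
      rw [← hmm, PiLp.inner_apply]
      simp only [RCLike.inner_apply, conj_trivial]
      exact Finset.sum_congr rfl (fun j _ => mul_comm _ _)
    rw [key]
    simp_rw [hrepr]
    have hne : b.repr x ≠ 0 := by
      intro h0
      apply hx
      have := congrArg b.repr.symm h0
      simpa using this
    obtain ⟨i, hi⟩ : ∃ i, b.repr x i ≠ 0 := by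
      by_contra! H
      exact hne (PiLp.ext fun j => by simpa using H j)
    refine Finset.sum_pos' (fun j _ => ?_) ⟨i, Finset.mem_univ i, ?_⟩
    · have h1 := mul_self_nonneg (b.repr x j)
      have hs := inv_nonneg.mpr (Real.sqrt_nonneg (μ j))
      nlinarith
    · have h1 : 0 < (Real.sqrt (μ i))⁻¹ := inv_pos.mpr (Real.sqrt_pos.mpr (hμpos i))
      have h0 : b.repr x i ≠ 0 := by simpa using hi
      have h2 : 0 < b.repr x i * b.repr x i := mul_self_pos.mpr h0
      nlinarith
  exact ⟨S, hSsym, hSpos, hBSS, p, rfl⟩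

private theorem aux_commute_aeval_sq {R : Type*} [CommRing R] {A : Type*} [Ring A]
    [Algebra R A] (a : A) (p : R[X]) : a * Polynomial.aeval (a * a) p
      = Polynomial.aeval (a * a) p * a := by
  induction p using Polynomial.induction_on' with
  | add p q hp hq => rw [map_add, mul_add, add_mul, hp, hq]
  | monomial n c =>
      rw [Polynomial.aeval_monomial, ← Algebra.smul_def, mul_smul_comm, smul_mul_assoc]
      congr 1
      exact (((Commute.refl a).mul_right (Commute.refl a)).pow_right n).eq

/-- If `A` is an invertible `h`-skew-symmetric operator on a finite-dimensional
real inner product space `(V, h)`, then there exists a symmetric positive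
definite operator `S` commuting with `A` such that `(A S)² = -Id`; moreover `S`
can be chosen to be a polynomial in `A²`. -/
theorem quaternionicDouble.stmt2
    {V : Type*} [AddCommGroup V] [Module ℝ V] [FiniteDimensional ℝ V]
    (h : V →ₗ[ℝ] V →ₗ[ℝ] ℝ)
    (hsym : ∀ x y, h x y = h y x)
    (hpos : ∀ x, x ≠ 0 → 0 < h x x)
    (A : Module.End ℝ V)
    (hbij : Function.Bijective A)
    (hskew : ∀ x y, h (A x) y = - h x (A y)) :
    ∃ S : Module.End ℝ V,
      (∀ x y, h (S x) y = h x (S y)) ∧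
      (∀ x, x ≠ 0 → 0 < h (S x) x) ∧
      A * S = S * A ∧
      (A * S) * (A * S) = -1 ∧
      ∃ P : Polynomial ℝ, S = Polynomial.aeval (A * A) P := by
  letI c : InnerProductSpace.Core ℝ V :=
    { inner := fun x y => h x y
      conj_inner_symm := fun x y => by simpa using hsym y x
      re_inner_nonneg := fun x => by
        by_cases hx : x = 0
        · simp [hx]
        · exact le_of_lt (by simpa using hpos x hx)
      definite := fun x hx => by
        by_contra h0
        exact (hpos x h0).ne' (by simpa using hx)
      add_left := fun x y z => by simp
      smul_left := fun x y r => by simp }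
  letI : NormedAddCommGroup V := c.toNormedAddCommGroup
  letI : InnerProductSpace ℝ V := InnerProductSpace.ofCore c.toCore
  have hinner : ∀ x y : V, ⟪x, y⟫ = h x y := fun x y => rfl
  set B : Module.End ℝ V := -(A * A) with hBdef
  have hB2 : ∀ x y : V, h (A (A x)) y = h x (A (A y)) := by
    intro x y
    rw [hskew (A x) y, hsym x (A (A y)), hskew (A y) x, hsym (A y) (A x)]
  have hBapp : ∀ x : V, B x = -(A (A x)) := by
    intro x
    rw [hBdef]
    simp [Module.End.mul_apply]
  have hBsym : LinearMap.IsSymmetric B := by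
    intro x y
    rw [hinner, hinner, hBapp, hBapp]
    simp only [map_neg, LinearMap.neg_apply]
    rw [hB2 x y]
  have hBpos : ∀ x : V, x ≠ 0 → 0 < ⟪B x, x⟫ := by
    intro x hx
    have hAx : A x ≠ 0 := fun h0 => hx (hbij.injective (by simpa using h0))
    have e1 : ⟪B x, x⟫ = h (A x) (A x) := by
      rw [hinner, hBapp x, map_neg, LinearMap.neg_apply, hskew (A x) x, neg_neg]
    rw [e1]
    exact hpos (A x) hAx
  obtain ⟨S, hSsym, hSpos, hBSS, p, hp⟩ := aux_sqrt_inv hBsym hBpos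
  have hp2 : S = Polynomial.aeval (A * A) (p.comp (-Polynomial.X)) := by
    rw [hp, Polynomial.aeval_comp, map_neg, Polynomial.aeval_X, ← hBdef]
  have hcomm : A * S = S * A := by rw [hp2]; exact aux_commute_aeval_sq A _
  have hsq : (A * S) * (A * S) = -1 := by
    have h1 : (A * S) * (A * S) = (A * A) * (S * S) := by
      calc (A * S) * (A * S) = A * (S * (A * S)) := by rw [mul_assoc]
        _ = A * ((S * A) * S) := by rw [mul_assoc]
        _ = A * ((A * S) * S) := by rw [hcomm]
        _ = A * (A * (S * S)) := by rw [mul_assoc]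
        _ = (A * A) * (S * S) := by rw [mul_assoc]
    rw [h1]
    have h2 : A * A = -B := by rw [hBdef, neg_neg]
    rw [h2, neg_mul, hBSS]
  refine ⟨S, fun x y => ?_, fun x hx => ?_, hcomm, hsq, p.comp (-Polynomial.X), hp2⟩
  · rw [← hinner, ← hinner]
    exact hSsym x y
  · rw [← hinner]
    exact hSpos x hx
end

section
/- Let V be a finite-dimensional real vector space with a complex structure I, and σ a non-degenerate complex-bilinear form of type (2,0) with respect to I. Suppose a finite group G acts linearly on V commuting with I and preserving σ. Then there exist a G-invariant positive definite inner product g on V and a G-equivariant linear operator J with J² = -Id, JI = -IJ, and g Hermitian with respect to both I and J. -/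
private lemma qd_pow_eig {V : Type*} [AddCommGroup V] [Module ℝ V]
    (T : Module.End ℝ V) (c : ℝ) (x : V) (h : T x = c • x) (k : ℕ) :
    (T ^ k) x = c ^ k • x := by
  induction k with
  | zero => simp
  | succ k ih =>
    rw [pow_succ, Module.End.mul_apply, h, map_smul, ih, smul_smul, ← pow_succ']

private lemma qd_aeval_eig {V : Type*} [AddCommGroup V] [Module ℝ V]
    (T : Module.End ℝ V) (c : ℝ) (x : V) (h : T x = c • x) (q : Polynomial ℝ) :
    (Polynomial.aeval T q) x = Polynomial.eval c q • x := by
  induction q using Polynomial.induction_on' with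
  | add p r hp hr => rw [map_add, LinearMap.add_apply, hp, hr, Polynomial.eval_add, add_smul]
  | monomial k a =>
    rw [Polynomial.aeval_monomial, Polynomial.eval_monomial, Module.End.mul_apply,
      qd_pow_eig T c x h k, map_smul, Module.algebraMap_end_apply, smul_smul]
    rw [mul_comm]

private lemma qd_commute_aeval {V : Type*} [AddCommGroup V] [Module ℝ V]
    (T S : Module.End ℝ V) (h : Commute S T) (q : Polynomial ℝ) :
    Commute S (Polynomial.aeval T q) := by
  induction q using Polynomial.induction_on' with
  | add p r hp hr => rw [map_add]; exact hp.add_right hr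
  | monomial k a =>
    rw [Polynomial.aeval_monomial]
    exact (Algebra.commute_algebraMap_right a S).mul_right (h.pow_right k)

private lemma qd_symm_pow {V : Type*} [AddCommGroup V] [Module ℝ V]
    (g0 : V →ₗ[ℝ] V →ₗ[ℝ] ℝ) (T : Module.End ℝ V)
    (h : ∀ x y, g0 (T x) y = g0 x (T y)) (k : ℕ) :
    ∀ x y, g0 ((T ^ k) x) y = g0 x ((T ^ k) y) := by
  induction k with
  | zero => intro x y; simp
  | succ k ih =>
    intro x y
    rw [pow_succ, Module.End.mul_apply, ih (T x) y, h, Module.End.mul_apply,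
      ← Module.End.mul_apply T (T ^ k), ← Module.End.mul_apply (T ^ k) T, pow_mul_comm']


private lemma qd_symm_aeval {V : Type*} [AddCommGroup V] [Module ℝ V]
    (g0 : V →ₗ[ℝ] V →ₗ[ℝ] ℝ) (T : Module.End ℝ V)
    (h : ∀ x y, g0 (T x) y = g0 x (T y)) (q : Polynomial ℝ) :
    ∀ x y, g0 ((Polynomial.aeval T q) x) y = g0 x ((Polynomial.aeval T q) y) := by
  induction q using Polynomial.induction_on' with
  | add p r hp hr =>
    intro x y
    simp only [map_add, LinearMap.add_apply, hp, hr]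
  | monomial k a =>
    intro x y
    simp only [Polynomial.aeval_monomial, Module.End.mul_apply, Module.algebraMap_end_apply,
      map_smul, LinearMap.smul_apply, qd_symm_pow g0 T h k]

private lemma qd_conj_comm {M : Type*} [Monoid M] (Q R X : M) (hQR : Q * R = 1)
    (hRQ : R * Q = 1) (h : X * Q = Q * X) : X * R = R * X := by
  calc X * R = R * Q * X * R := by rw [hRQ, one_mul]
    _ = R * (Q * X) * R := by rw [mul_assoc R Q X]
    _ = R * (X * Q) * R := by rw [h]
    _ = R * X * (Q * R) := by
        rw [mul_assoc R (X * Q) R, mul_assoc X Q R, ← mul_assoc R X (Q * R)]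
    _ = R * X := by rw [hQR, mul_one]




/-- Equivariant version: if a finite group `G` acts linearly on `(V, I)`
commuting with the complex structure `I` and preserving a non-degenerate
complex-bilinear `(2,0)`-form `σ`, then there is a `G`-invariant compatible
hyper-Hermitian structure `(g, J)`: `g` is a `G`-invariant positive definite
inner product, Hermitian for both `I` and `J`, and `J` is a `G`-equivariant
complex structure anticommuting with `I`. -/
theorem quaternionicDouble.stmt3
    {V : Type*} [AddCommGroup V] [Module ℝ V] [FiniteDimensional ℝ V]
    (I : Module.End ℝ V) (hI : I * I = -1)
    (σ : V →ₗ[ℝ] V →ₗ[ℝ] ℂ)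
    (halt : ∀ x y, σ x y = - σ y x)
    (htype : ∀ x y, σ (I x) y = Complex.I * σ x y)
    (hnd : ∀ x, x ≠ 0 → ∃ y, σ x y ≠ 0)
    {G : Type*} [Group G] [Finite G]
    (ρ : G →* (V ≃ₗ[ℝ] V))
    (hcomm : ∀ γ x, ρ γ (I x) = I (ρ γ x))
    (hpres : ∀ γ x y, σ (ρ γ x) (ρ γ y) = σ x y) :
    ∃ (g : V →ₗ[ℝ] V →ₗ[ℝ] ℝ) (J : Module.End ℝ V),
      (∀ x y, g x y = g y x) ∧
      (∀ x, x ≠ 0 → 0 < g x x) ∧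
      (∀ γ x y, g (ρ γ x) (ρ γ y) = g x y) ∧
      (∀ γ x, J (ρ γ x) = ρ γ (J x)) ∧
      J * J = -1 ∧
      J * I = -(I * J) ∧
      (∀ x y, g (I x) (I y) = g x y) ∧
      (∀ x y, g (J x) (J y) = g x y) := by
  classical
  letI : Fintype G := Fintype.ofFinite G
  -- basic consequences
  have hI2 : ∀ x : V, I (I x) = -x := by
    intro x
    have h := LinearMap.ext_iff.mp hI x
    simpa [Module.End.mul_apply] using h
  have hρmul : ∀ (γ δ : G) (x : V), ρ γ (ρ δ x) = ρ (γ * δ) x := by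
    intro γ δ x; rw [map_mul]; rfl
  have hρone : ∀ x : V, ρ (1 : G) x = x := by
    intro x; rw [map_one]; rfl
  have hρinv : ∀ (γ : G) (x : V), ρ γ (ρ γ⁻¹ x) = x := by
    intro γ x; rw [hρmul, mul_inv_cancel, hρone]
  have hσIr : ∀ x y, σ x (I y) = Complex.I * σ x y := by
    intro x y
    rw [halt x (I y), htype, halt y x]
    ring
  -- the base positive definite form h1
  set b0 : Module.Basis (Fin (Module.finrank ℝ V)) ℝ V := Module.finBasis ℝ V with hb0
  set h1 : V →ₗ[ℝ] V →ₗ[ℝ] ℝ := ∑ i, (b0.coord i).smulRight (b0.coord i) with hh1def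
  have hh1 : ∀ x y, h1 x y = ∑ i, b0.coord i x * b0.coord i y := by
    intro x y
    simp [hh1def, LinearMap.sum_apply, LinearMap.smulRight_apply, smul_eq_mul]
  have hh1symm : ∀ x y, h1 x y = h1 y x := by
    intro x y; rw [hh1, hh1]
    exact Finset.sum_congr rfl fun i _ => mul_comm _ _
  have hh1nonneg : ∀ x, 0 ≤ h1 x x := by
    intro x; rw [hh1]
    exact Finset.sum_nonneg fun i _ => mul_self_nonneg _
  have hh1pos : ∀ x, x ≠ 0 → 0 < h1 x x := by
    intro x hx
    rw [hh1]
    obtain ⟨i, hi⟩ : ∃ i, b0.coord i x ≠ 0 := by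
      by_contra hc
      push_neg at hc
      exact hx (b0.forall_coord_eq_zero_iff.mp hc)
    refine Finset.sum_pos' (fun i _ => mul_self_nonneg _) ⟨i, Finset.mem_univ i, ?_⟩
    exact mul_self_pos.mpr hi
  -- the averaged form g0
  set g0 : V →ₗ[ℝ] V →ₗ[ℝ] ℝ := ∑ γ : G,
      (h1.compl₁₂ (ρ γ : V →ₗ[ℝ] V) (ρ γ : V →ₗ[ℝ] V)
        + h1.compl₁₂ (I ∘ₗ (ρ γ : V →ₗ[ℝ] V)) (I ∘ₗ (ρ γ : V →ₗ[ℝ] V))) with hg0def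
  have hg0 : ∀ x y, g0 x y
      = ∑ γ : G, (h1 (ρ γ x) (ρ γ y) + h1 (I (ρ γ x)) (I (ρ γ y))) := by
    intro x y
    simp [hg0def, LinearMap.sum_apply, LinearMap.add_apply, LinearMap.compl₁₂_apply,
      LinearMap.comp_apply]
  have hg0symm : ∀ x y, g0 x y = g0 y x := by
    intro x y
    rw [hg0, hg0]
    exact Finset.sum_congr rfl fun γ _ => by rw [hh1symm, hh1symm (I _)]
  have hg0pos : ∀ x, x ≠ 0 → 0 < g0 x x := by
    intro x hx
    rw [hg0]
    refine Finset.sum_pos' (fun γ _ => add_nonneg (hh1nonneg _) (hh1nonneg _))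
      ⟨1, Finset.mem_univ 1, ?_⟩
    rw [hρone]
    exact add_pos_of_pos_of_nonneg (hh1pos x hx) (hh1nonneg _)
  have hg0G : ∀ (δ : G) x y, g0 (ρ δ x) (ρ δ y) = g0 x y := by
    intro δ x y
    rw [hg0, hg0]
    refine Fintype.sum_equiv (Equiv.mulRight δ)
      (fun γ => h1 (ρ γ (ρ δ x)) (ρ γ (ρ δ y))
        + h1 (I (ρ γ (ρ δ x))) (I (ρ γ (ρ δ y))))
      (fun γ => h1 (ρ γ x) (ρ γ y) + h1 (I (ρ γ x)) (I (ρ γ y))) ?_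
    intro γ
    simp only [Equiv.coe_mulRight, hρmul]
  have hg0Iinv : ∀ x y, g0 (I x) (I y) = g0 x y := by
    intro x y
    rw [hg0, hg0]
    refine Finset.sum_congr rfl fun γ _ => ?_
    rw [hcomm, hcomm, hI2, hI2]
    have h2 : h1 (-(ρ γ x)) (-(ρ γ y)) = h1 (ρ γ x) (ρ γ y) := by
      simp [map_neg]
    rw [h2, add_comm]
  -- nondegeneracy of g0
  have hg0nd : LinearMap.BilinForm.Nondegenerate g0 := by
    refine ⟨fun m hm => ?_, fun m hm => ?_⟩ <;>
    · by_contra hm0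
      exact (hg0pos m hm0).ne' (hm m)
  have hg0inj : ∀ u v : V, (∀ y, g0 u y = g0 v y) → u = v := by
    intro u v h
    have : ∀ y, g0 (u - v) y = 0 := by
      intro y; rw [map_sub, LinearMap.sub_apply, h y, sub_self]
    have := hg0nd.1 (u - v) this
    exact sub_eq_zero.mp this
  -- the operator A with g0 (A x) y = re (σ x y)
  set Sb : V →ₗ[ℝ] V →ₗ[ℝ] ℝ := σ.compr₂ Complex.reLm with hSbdef
  have hSb : ∀ x y, Sb x y = (σ x y).re := fun x y => rfl
  set A : Module.End ℝ V :=
    ((LinearMap.BilinForm.toDual g0 hg0nd).symm : Module.Dual ℝ V →ₗ[ℝ] V) ∘ₗ Sb with hAdef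
  have hA : ∀ x y, g0 (A x) y = (σ x y).re := by
    intro x y
    have : g0 ((LinearMap.BilinForm.toDual g0 hg0nd).symm (Sb x)) y = Sb x y :=
      LinearMap.BilinForm.apply_toDual_symm_apply (B := g0) (hB := hg0nd) (Sb x) y
    simpa [hAdef, hSb] using this
  -- basic facts about A
  have hAskew : ∀ x y, g0 (A x) y = -g0 (A y) x := by
    intro x y
    rw [hA, hA, halt]
    simp
  have hIskew : ∀ x y, g0 (I x) y = -g0 x (I y) := by
    intro x y
    have h2 : g0 (I x) y = g0 (I x) (-(I (I y))) := by rw [hI2, neg_neg]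
    rw [h2, map_neg, hg0Iinv]
  have hAinj : ∀ x : V, A x = 0 → x = 0 := by
    intro x hx
    by_contra hx0
    obtain ⟨y, hy⟩ := hnd x hx0
    have hre : ∀ z, (σ x z).re = 0 := by
      intro z
      rw [← hA, hx, map_zero, LinearMap.zero_apply]
    have him : (σ x y).im = 0 := by
      have h3 := hre (I y)
      rw [hσIr] at h3
      simpa using h3
    exact hy (Complex.ext (hre y) him)
  have hAIpt : ∀ x, A (I x) = -(I (A x)) := by
    intro x
    refine hg0inj _ _ fun y => ?_
    rw [hA, htype]
    have h4 : g0 (-(I (A x))) y = g0 (A x) (I y) := by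
      rw [map_neg, LinearMap.neg_apply, hIskew (A x) y]
      ring_nf
    rw [h4, hA, hσIr]
  have hAρpt : ∀ (γ : G) x, A (ρ γ x) = ρ γ (A x) := by
    intro γ x
    refine hg0inj _ _ fun y => ?_
    have h5 : σ (ρ γ x) y = σ x (ρ γ⁻¹ y) := by
      conv_lhs => rw [← hρinv γ y]
      rw [hpres]
    have h6 : g0 (ρ γ (A x)) y = g0 (A x) (ρ γ⁻¹ y) := by
      conv_lhs => rw [← hρinv γ y]
      rw [hg0G]
    rw [hA, h5, h6, hA]
  -- P = -(A*A) is symmetric positive definite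
  set P : Module.End ℝ V := -(A * A) with hPdef
  have hPapp : ∀ x, P x = -(A (A x)) := by
    intro x
    simp [hPdef, Module.End.mul_apply]
  have hPAA : ∀ x y, g0 (P x) y = g0 (A x) (A y) := by
    intro x y
    rw [hPapp, map_neg, LinearMap.neg_apply, hAskew (A x) y, neg_neg, hg0symm]
  have hPsymg : ∀ x y, g0 (P x) y = g0 x (P y) := by
    intro x y
    rw [hPAA, hg0symm x (P y), hPAA, hg0symm]
  have hPposd : ∀ x, x ≠ 0 → 0 < g0 (P x) x := by
    intro x hx
    rw [hPAA]
    refine hg0pos (A x) fun h => ?_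
    exact hx (hAinj x h)
  -- inner product space structure from g0
  let core : InnerProductSpace.Core ℝ V :=
  { inner := fun x y => g0 x y
    conj_inner_symm := fun x y => by simpa using hg0symm y x
    re_inner_nonneg := fun x => by
      rcases eq_or_ne x 0 with h | h
      · simp [h]
      · exact le_of_lt (by simpa using hg0pos x h)
    add_left := fun x y z => by simp [map_add]
    smul_left := fun x y r => by simp
    definite := fun x hx => by
      by_contra h
      exact (hg0pos x h).ne' (by simpa using hx) }
  letI : NormedAddCommGroup V := core.toNormedAddCommGroup
  letI : InnerProductSpace ℝ V := InnerProductSpace.ofCore core.toCore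
  have hinner : ∀ x y : V, (inner ℝ x y : ℝ) = g0 x y := fun x y => rfl
  have hPsym : P.IsSymmetric := by
    intro x y
    rw [hinner, hinner]
    exact hPsymg x y
  -- spectral theory
  set μ : Fin (Module.finrank ℝ V) → ℝ := hPsym.eigenvalues rfl with hμdef
  set bE : OrthonormalBasis (Fin (Module.finrank ℝ V)) ℝ V := hPsym.eigenvectorBasis rfl
    with hbEdef
  have hbE : ∀ i, P (bE i) = μ i • bE i := by
    intro i
    exact_mod_cast hPsym.apply_eigenvectorBasis rfl i
  have hbEne : ∀ i, bE i ≠ 0 := by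
    intro i
    have h := bE.toBasis.ne_zero i
    simpa [OrthonormalBasis.coe_toBasis] using h
  have hg0bE : ∀ i, g0 (bE i) (bE i) = 1 := by
    intro i
    have h := bE.orthonormal.1 i
    have h2 : (inner ℝ (bE i) (bE i) : ℝ) = ‖bE i‖ ^ 2 := real_inner_self_eq_norm_sq _
    rw [hinner] at h2
    rw [h2, h]
    norm_num
  have hμpos : ∀ i, 0 < μ i := by
    intro i
    have h := hPposd (bE i) (hbEne i)
    rw [hbE i, map_smul, LinearMap.smul_apply, smul_eq_mul, hg0bE, mul_one] at h
    exact h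
  -- square root of P via Lagrange interpolation
  set p : Polynomial ℝ := Lagrange.interpolate (Finset.image μ Finset.univ) id Real.sqrt
    with hpdef
  have heval : ∀ i, Polynomial.eval (μ i) p = Real.sqrt (μ i) := by
    intro i
    have h := Lagrange.eval_interpolate_at_node (s := Finset.image μ Finset.univ)
      (v := id) Real.sqrt (Set.injOn_id _) (Finset.mem_image_of_mem μ (Finset.mem_univ i))
    simpa [hpdef] using h
  set Q : Module.End ℝ V := Polynomial.aeval P p with hQdef
  have hQb : ∀ i, Q (bE i) = Real.sqrt (μ i) • bE i := by
    intro i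
    rw [hQdef, qd_aeval_eig P (μ i) (bE i) (hbE i) p, heval i]
  set R : Module.End ℝ V := bE.toBasis.constr ℝ (fun i => (Real.sqrt (μ i))⁻¹ • bE i)
    with hRdef
  have hRb : ∀ i, R (bE i) = (Real.sqrt (μ i))⁻¹ • bE i := by
    intro i
    have h := bE.toBasis.constr_basis ℝ (fun i => (Real.sqrt (μ i))⁻¹ • bE i) i
    simpa [hRdef, OrthonormalBasis.coe_toBasis] using h
  have hsq : ∀ i, 0 < Real.sqrt (μ i) := fun i => Real.sqrt_pos.mpr (hμpos i)
  have hQR : Q * R = 1 := by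
    refine Module.Basis.ext bE.toBasis fun i => ?_
    simp only [OrthonormalBasis.coe_toBasis, Module.End.mul_apply, Module.End.one_apply]
    rw [hRb, map_smul, hQb, smul_smul, inv_mul_cancel₀ (hsq i).ne', one_smul]
  have hRQ : R * Q = 1 := by
    refine Module.Basis.ext bE.toBasis fun i => ?_
    simp only [OrthonormalBasis.coe_toBasis, Module.End.mul_apply, Module.End.one_apply]
    rw [hQb, map_smul, hRb, smul_smul, mul_inv_cancel₀ (hsq i).ne', one_smul]
  have hQQ : Q * Q = P := by
    refine Module.Basis.ext bE.toBasis fun i => ?_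
    simp only [OrthonormalBasis.coe_toBasis, Module.End.mul_apply]
    rw [hQb, map_smul, hQb, smul_smul, Real.mul_self_sqrt (hμpos i).le, hbE]
  -- commutation relations
  have hAAe : A * I = -(I * A) := by
    refine LinearMap.ext fun x => ?_
    simpa [Module.End.mul_apply] using hAIpt x
  have hIA : I * A = -(A * I) := by rw [hAAe, neg_neg]
  have hIP : Commute I P := by
    have h1 : I * (A * A) = A * A * I := by
      calc I * (A * A) = (I * A) * A := by rw [mul_assoc]
        _ = -((A * I) * A) := by rw [hIA, neg_mul]
        _ = -(A * (I * A)) := by rw [mul_assoc]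
        _ = A * (A * I) := by rw [hIA, mul_neg, neg_neg]
        _ = A * A * I := by rw [mul_assoc]
    show I * P = P * I
    rw [hPdef, mul_neg, neg_mul, h1]
  have hAP : Commute A P := by
    show A * P = P * A
    rw [hPdef, mul_neg, neg_mul, mul_assoc]
  have hEA : ∀ γ : G, ((ρ γ : V →ₗ[ℝ] V)) * A = A * ((ρ γ : V →ₗ[ℝ] V)) := by
    intro γ
    refine LinearMap.ext fun x => ?_
    simpa [Module.End.mul_apply] using (hAρpt γ x).symm
  have hρP : ∀ γ : G, Commute ((ρ γ : V →ₗ[ℝ] V)) P := by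
    intro γ
    show _ * P = P * _
    rw [hPdef, mul_neg, neg_mul]
    congr 1
    calc (ρ γ : V →ₗ[ℝ] V) * (A * A) = ((ρ γ : V →ₗ[ℝ] V) * A) * A := by rw [mul_assoc]
      _ = (A * (ρ γ : V →ₗ[ℝ] V)) * A := by rw [hEA]
      _ = A * ((ρ γ : V →ₗ[ℝ] V) * A) := by rw [mul_assoc]
      _ = A * (A * (ρ γ : V →ₗ[ℝ] V)) := by rw [hEA]
      _ = A * A * (ρ γ : V →ₗ[ℝ] V) := by rw [mul_assoc]
  have hQI : Commute I Q := qd_commute_aeval P I hIP p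
  have hQA : Commute A Q := qd_commute_aeval P A hAP p
  have hQρ : ∀ γ : G, Commute ((ρ γ : V →ₗ[ℝ] V)) Q :=
    fun γ => qd_commute_aeval P _ (hρP γ) p
  have hRA : A * R = R * A := qd_conj_comm Q R A hQR hRQ hQA.eq
  have hRI : I * R = R * I := qd_conj_comm Q R I hQR hRQ hQI.eq
  have hRρ : ∀ γ : G, ((ρ γ : V →ₗ[ℝ] V)) * R = R * ((ρ γ : V →ₗ[ℝ] V)) :=
    fun γ => qd_conj_comm Q R _ hQR hRQ (hQρ γ).eq
  -- the complex structure J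
  set Jm : Module.End ℝ V := A * R with hJdef
  have hAA : A * A = -P := by rw [hPdef, neg_neg]
  have hPRR : P * (R * R) = 1 := by
    calc P * (R * R) = Q * Q * (R * R) := by rw [hQQ]
      _ = Q * ((Q * R) * R) := by rw [mul_assoc, ← mul_assoc Q R R]
      _ = Q * R := by conv_lhs => rw [hQR, one_mul]
      _ = 1 := hQR
  have hJJ : Jm * Jm = -1 := by
    calc Jm * Jm = A * (R * (A * R)) := by rw [hJdef, mul_assoc]
      _ = A * ((R * A) * R) := by rw [← mul_assoc R A R]
      _ = A * ((A * R) * R) := by rw [← hRA]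
      _ = (A * A) * (R * R) := by rw [mul_assoc A R R, ← mul_assoc]
      _ = -(P * (R * R)) := by rw [hAA, neg_mul]
      _ = -1 := by rw [hPRR]
  have hJI : Jm * I = -(I * Jm) := by
    calc Jm * I = A * (R * I) := by rw [hJdef, mul_assoc]
      _ = A * (I * R) := by rw [hRI]
      _ = (A * I) * R := by rw [mul_assoc]
      _ = -((I * A) * R) := by rw [hAAe, neg_mul]
      _ = -(I * (A * R)) := by rw [mul_assoc]
      _ = -(I * Jm) := by rw [hJdef]
  have hJρ : ∀ (γ : G) (x : V), Jm (ρ γ x) = ρ γ (Jm x) := by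
    intro γ x
    have h8 : ((ρ γ : V →ₗ[ℝ] V)) * Jm = Jm * ((ρ γ : V →ₗ[ℝ] V)) := by
      calc (ρ γ : V →ₗ[ℝ] V) * (A * R) = ((ρ γ : V →ₗ[ℝ] V) * A) * R := by rw [mul_assoc]
        _ = (A * (ρ γ : V →ₗ[ℝ] V)) * R := by rw [hEA]
        _ = A * ((ρ γ : V →ₗ[ℝ] V) * R) := by rw [mul_assoc]
        _ = A * (R * (ρ γ : V →ₗ[ℝ] V)) := by rw [hRρ]
        _ = (A * R) * (ρ γ : V →ₗ[ℝ] V) := by rw [mul_assoc]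
    have h9 := LinearMap.ext_iff.mp h8 x
    simpa [Module.End.mul_apply] using h9.symm
  -- metric invariance under J
  have hQsymg : ∀ x y, g0 (Q x) y = g0 x (Q y) := qd_symm_aeval g0 P hPsymg p
  have hQRpt : ∀ y, Q (R y) = y := by
    intro y
    have h := LinearMap.ext_iff.mp hQR y
    simpa [Module.End.mul_apply] using h
  have hRsymg : ∀ x y, g0 (R x) y = g0 x (R y) := by
    intro x y
    calc g0 (R x) y = g0 (R x) (Q (R y)) := by rw [hQRpt]
      _ = g0 (Q (R x)) (R y) := (hQsymg (R x) (R y)).symm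
      _ = g0 x (R y) := by rw [hQRpt]
  have hRApt : ∀ y, R (A y) = A (R y) := by
    intro y
    have h := LinearMap.ext_iff.mp hRA y
    simpa [Module.End.mul_apply, hJdef] using h.symm
  have hJmpt : ∀ x, Jm x = A (R x) := by
    intro x
    simp [hJdef, Module.End.mul_apply]
  have hJskew : ∀ x y, g0 (Jm x) y = -g0 x (Jm y) := by
    intro x y
    calc g0 (Jm x) y = (σ (R x) y).re := by rw [hJmpt, hA]
      _ = (-(σ y (R x))).re := by rw [← halt]
      _ = -(σ y (R x)).re := by simp
      _ = -g0 (A y) (R x) := by rw [hA]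
      _ = -g0 (R x) (A y) := by rw [hg0symm]
      _ = -g0 x (R (A y)) := by rw [hRsymg]
      _ = -g0 x (A (R y)) := by rw [hRApt]
      _ = -g0 x (Jm y) := by rw [hJmpt]
  have hJJpt : ∀ y, Jm (Jm y) = -y := by
    intro y
    have h := LinearMap.ext_iff.mp hJJ y
    simpa [Module.End.mul_apply] using h
  have hg0J : ∀ x y, g0 (Jm x) (Jm y) = g0 x y := by
    intro x y
    rw [hJskew x (Jm y), hJJpt y, map_neg]
    simp
  exact ⟨g0, Jm, hg0symm, hg0pos, hg0G, hJρ, hJJ, hJI, hg0Iinv, hg0J⟩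
end
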